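/- arXiv:2601.09475 — 2 statements merged into one kernel-verified Lean document; each statement's English description precedes it below -/
import Mathlib

section
/- Let 0 < β < 1, λ ∈ ℝ \ {0}, f₂ ∈ L²(ℝ), and set η(ξ) = |ξ|^{(2β-1)/2}. Then |∫_{-∞}^{∞} η(ξ) f₂(ξ)/(iλ + ξ²) dξ| ≤ C |λ|^{(β-2)/2} ‖f₂‖_{L²(ℝ)} for a constant C depending only on β. -/
open MeasureTheory

section aux
open Real Set

private lemma auxK_int {β : ℝ} (hβ0 : 0 < β) (hβ1 : β < 1) :
    Integrable (fun u : ℝ => |u| ^ (2*β-1) / (1 + u^4)) := by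
  have hmeas : Measurable (fun u : ℝ => |u| ^ (2*β-1) / (1 + u^4)) := by fun_prop
  have hnonneg : ∀ u : ℝ, 0 ≤ |u| ^ (2*β-1) / (1 + u^4) := fun u => by positivity
  have h01 : IntegrableOn (fun u : ℝ => |u| ^ (2*β-1) / (1 + u^4)) (Ioc (0:ℝ) 1) := by
    have hbase : IntegrableOn (fun u : ℝ => u ^ (2*β-1)) (Ioc (0:ℝ) 1) := by
      have := intervalIntegral.intervalIntegrable_rpow' (a := 0) (b := 1)
        (r := 2*β-1) (by linarith)
      rwa [intervalIntegrable_iff_integrableOn_Ioc_of_le (by norm_num)] at this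
    apply Integrable.mono' hbase (hmeas.aestronglyMeasurable.restrict)
    filter_upwards [ae_restrict_mem measurableSet_Ioc] with x hx
    rw [Real.norm_eq_abs, abs_of_nonneg (hnonneg x), abs_of_pos hx.1]
    rw [div_le_iff₀ (by positivity)]
    nlinarith [rpow_nonneg hx.1.le (2*β-1), pow_nonneg hx.1.le 4]
  have h1i : IntegrableOn (fun u : ℝ => |u| ^ (2*β-1) / (1 + u^4)) (Ioi (1:ℝ)) := by
    have hbase : IntegrableOn (fun u : ℝ => u ^ (2*β-5)) (Ioi (1:ℝ)) :=
      integrableOn_Ioi_rpow_of_lt (by linarith) one_pos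
    apply Integrable.mono' hbase (hmeas.aestronglyMeasurable.restrict)
    filter_upwards [ae_restrict_mem measurableSet_Ioi] with x hx
    have hx0 : (0:ℝ) < x := lt_trans one_pos hx
    rw [Real.norm_eq_abs, abs_of_nonneg (hnonneg x), abs_of_pos hx0]
    have h4 : x ^ (2*β-5) = x ^ (2*β-1) / x^4 := by
      rw [← Real.rpow_natCast x 4, ← Real.rpow_sub hx0]
      congr 1; push_cast; ring
    rw [h4]
    apply div_le_div_of_nonneg_left (rpow_nonneg hx0.le _) (by positivity)
    nlinarith [pow_nonneg hx0.le 4]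
  have hIoi : IntegrableOn (fun u : ℝ => |u| ^ (2*β-1) / (1 + u^4)) (Ioi (0:ℝ)) := by
    have : Ioi (0:ℝ) = Ioc 0 1 ∪ Ioi 1 := by
      rw [Ioc_union_Ioi_eq_Ioi]; norm_num
    rw [this]; exact h01.union h1i
  rw [← integrableOn_univ, ← @Iio_union_Ici _ _ (0 : ℝ), integrableOn_union,
    integrableOn_Ici_iff_integrableOn_Ioi]
  refine ⟨?_, hIoi⟩
  rw [← (Measure.measurePreserving_neg (volume : Measure ℝ)).integrableOn_comp_preimage
      (Homeomorph.neg ℝ).measurableEmbedding]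
  simp only [Function.comp_def, neg_preimage, neg_Iio, neg_neg, neg_zero]
  simpa [abs_neg, show ∀ x:ℝ, (-x)^4 = x^4 from fun x => by ring] using hIoi

private lemma auxscale (β : ℝ) {l : ℝ} (hl : l ≠ 0) :
    ∫ ξ : ℝ, |ξ|^(2*β-1)/(l^2 + ξ^4) = |l|^(β-2) * ∫ u : ℝ, |u|^(2*β-1)/(1+u^4) := by
  set a := Real.sqrt |l| with ha
  have hl0 : 0 < |l| := abs_pos.mpr hl
  have ha0 : 0 < a := Real.sqrt_pos.mpr hl0
  have ha2 : a^2 = |l| := Real.sq_sqrt hl0.le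
  have ha4 : a^4 = l^2 := by
    calc a^4 = (a^2)^2 := by ring
    _ = |l|^2 := by rw [ha2]
    _ = l^2 := sq_abs l
  have key := MeasureTheory.Measure.integral_comp_mul_left
    (fun ξ : ℝ => |ξ|^(2*β-1)/(l^2 + ξ^4)) a
  have lhs_eq : (fun x : ℝ => |a*x|^(2*β-1)/(l^2 + (a*x)^4))
      = fun x => (a^(2*β-1)/l^2) * (|x|^(2*β-1)/(1+x^4)) := by
    funext x
    rw [abs_mul, abs_of_pos ha0, Real.mul_rpow ha0.le (abs_nonneg x), mul_pow, ha4,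
      div_mul_div_comm]
    congr 1
    ring
  simp only [lhs_eq, smul_eq_mul] at key
  rw [integral_const_mul] at key
  have h2 : ∫ ξ : ℝ, |ξ|^(2*β-1)/(l^2 + ξ^4)
      = a * ((a^(2*β-1)/l^2) * ∫ u : ℝ, |u|^(2*β-1)/(1+u^4)) := by
    rw [abs_of_pos (inv_pos.mpr ha0)] at key
    have h3 := congrArg (fun t => a * t) key
    rw [mul_inv_cancel_left₀ ha0.ne'] at h3
    exact h3.symm
  rw [h2]
  have haa : a * a^(2*β-1) = |l|^β := by
    have h1 : a * a^(2*β-1) = a ^ (2*β) := by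
      nth_rewrite 1 [← Real.rpow_one a]
      rw [← Real.rpow_add ha0]; congr 1; ring
    rw [h1, ha, Real.sqrt_eq_rpow, ← Real.rpow_mul hl0.le]
    congr 1; ring
  have hl2 : l^2 = |l| ^ ((2:ℕ):ℝ) := by rw [Real.rpow_natCast]; exact (sq_abs l).symm
  rw [← mul_assoc, mul_div_assoc' a, haa, hl2, ← Real.rpow_sub hl0]
  norm_num

private lemma gnorm_sq (β l ξ : ℝ) :
    ‖((|ξ| ^ ((2 * β - 1) / 2) : ℝ) : ℂ) / (Complex.I * l + (ξ : ℂ) ^ 2)‖^2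
      = |ξ|^(2*β-1)/(l^2+ξ^4) := by
  rw [norm_div, div_pow]
  congr 1
  · rw [Complex.norm_real, Real.norm_eq_abs,
      abs_of_nonneg (Real.rpow_nonneg (abs_nonneg ξ) _),
      ← Real.rpow_natCast (|ξ| ^ ((2*β-1)/2)) 2, ← Real.rpow_mul (abs_nonneg ξ)]
    congr 1
    push_cast; ring
  · have hz : Complex.I * (l:ℂ) + (ξ:ℂ)^2 = Complex.I * (l:ℂ) + ((ξ^2 : ℝ) : ℂ) := by
      push_cast; ring
    rw [hz, Complex.sq_norm, Complex.normSq_apply]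
    simp [← Complex.ofReal_pow]
    ring

private lemma Fint {β : ℝ} (hβ0 : 0 < β) (hβ1 : β < 1) {l : ℝ} (hl : l ≠ 0) :
    Integrable (fun ξ : ℝ => |ξ|^(2*β-1)/(l^2+ξ^4)) := by
  have hbase : Integrable (fun u : ℝ => |u| ^ (2*β-1) / (1 + u^4)) := auxK_int hβ0 hβ1
  set a := Real.sqrt |l| with ha
  have hl0 : 0 < |l| := abs_pos.mpr hl
  have ha0 : 0 < a := Real.sqrt_pos.mpr hl0
  have ha4 : a^4 = l^2 := by
    have ha2 : a^2 = |l| := Real.sq_sqrt hl0.le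
    calc a^4 = (a^2)^2 := by ring
    _ = |l|^2 := by rw [ha2]
    _ = l^2 := sq_abs l
  rw [← MeasureTheory.integrable_comp_mul_left_iff
    (fun ξ : ℝ => |ξ|^(2*β-1)/(l^2+ξ^4)) ha0.ne']
  have lhs_eq : (fun x : ℝ => |a*x|^(2*β-1)/(l^2 + (a*x)^4))
      = fun x => (a^(2*β-1)/l^2) * (|x|^(2*β-1)/(1+x^4)) := by
    funext x
    rw [abs_mul, abs_of_pos ha0, Real.mul_rpow ha0.le (abs_nonneg x), mul_pow, ha4,
      div_mul_div_comm]
    congr 1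
    ring
  rw [lhs_eq]
  exact hbase.const_mul _

private lemma gmem' {β : ℝ} (hβ0 : 0 < β) (hβ1 : β < 1) {l : ℝ} (hl : l ≠ 0) :
    MemLp (fun ξ : ℝ => starRingEnd ℂ (((|ξ| ^ ((2 * β - 1) / 2) : ℝ) : ℂ)
      / (Complex.I * l + (ξ : ℂ) ^ 2))) 2 (volume : Measure ℝ) := by
  have hm : Measurable (fun ξ : ℝ => ((|ξ| ^ ((2 * β - 1) / 2) : ℝ) : ℂ)
      / (Complex.I * l + (ξ : ℂ) ^ 2)) := by
    apply Measurable.div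
    · exact Complex.measurable_ofReal.comp (by fun_prop)
    · exact (continuous_const.add ((Complex.continuous_ofReal).pow 2)).measurable
  have hsm : AEStronglyMeasurable (fun ξ : ℝ => starRingEnd ℂ (((|ξ| ^ ((2 * β - 1) / 2) : ℝ) : ℂ)
      / (Complex.I * l + (ξ : ℂ) ^ 2))) volume := by
    simp only [starRingEnd_apply]
    exact (Complex.continuous_conj.measurable.comp hm).aestronglyMeasurable
  rw [memLp_two_iff_integrable_sq_norm hsm]
  simp only [RCLike.norm_conj]
  exact (Fint hβ0 hβ1 hl).congr (ae_of_all _ fun ξ => (gnorm_sq β l ξ).symm)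

end aux

/-- For `0 < β < 1` there is `C > 0` (depending only on `β`) such that for all real `l ≠ 0`
and all `f₂ ∈ L²(ℝ)`, with `η(ξ) = |ξ|^((2β-1)/2)`,
`|∫ η(ξ) f₂(ξ)/(i l + ξ²) dξ| ≤ C |l|^((β-2)/2) ‖f₂‖_{L²}`. -/
theorem stmt4 (β : ℝ) (hβ0 : 0 < β) (hβ1 : β < 1) :
    ∃ C > 0, ∀ (l : ℝ), l ≠ 0 →
      ∀ f₂ : MeasureTheory.Lp ℂ 2 (volume : MeasureTheory.Measure ℝ),
        ‖∫ ξ : ℝ, ((|ξ| ^ ((2 * β - 1) / 2) : ℝ) : ℂ) * f₂ ξ / (Complex.I * l + (ξ : ℂ) ^ 2)‖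
          ≤ C * |l| ^ ((β - 2) / 2) * ‖f₂‖ := by
  set K := ∫ u : ℝ, |u|^(2*β-1)/(1+u^4) with hK
  have hK0 : 0 ≤ K := integral_nonneg fun u => by positivity
  refine ⟨Real.sqrt (K+1), Real.sqrt_pos.mpr (by linarith), ?_⟩
  intro l hl f₂
  set g : ℝ → ℂ :=
    fun ξ => ((|ξ| ^ ((2 * β - 1) / 2) : ℝ) : ℂ) / (Complex.I * l + (ξ : ℂ) ^ 2) with hg
  have hl0 : 0 < |l| := abs_pos.mpr hl
  have hmem' := gmem' hβ0 hβ1 hl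
  set G : Lp ℂ 2 (volume : Measure ℝ) := hmem'.toLp _ with hGdef
  have hcoe : (G : ℝ → ℂ) =ᵐ[volume] fun ξ => starRingEnd ℂ (g ξ) := hmem'.coeFn_toLp
  have hie : ∫ ξ : ℝ, ((|ξ| ^ ((2 * β - 1) / 2) : ℝ) : ℂ) * f₂ ξ / (Complex.I * l + (ξ : ℂ) ^ 2)
      = @inner ℂ _ _ G f₂ := by
    rw [MeasureTheory.L2.inner_def]
    apply integral_congr_ae
    filter_upwards [hcoe] with ξ hξ
    rw [RCLike.inner_apply', hξ, Complex.conj_conj]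
    exact mul_div_right_comm _ _ _
  rw [hie]
  refine le_trans (norm_inner_le_norm (𝕜 := ℂ) G f₂) ?_
  have hnormG : ‖G‖ ≤ Real.sqrt (K+1) * |l| ^ ((β - 2) / 2) := by
    rw [hGdef, Lp.norm_toLp,
      hmem'.eLpNorm_eq_integral_rpow_norm two_ne_zero ENNReal.ofNat_ne_top]
    have h2r : ((2:ENNReal)).toReal = (2:ℝ) := by simp
    rw [ENNReal.toReal_ofReal (by positivity)]
    have hI : (∫ ξ : ℝ, ‖starRingEnd ℂ (g ξ)‖ ^ ((2:ENNReal)).toReal)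
        = |l|^(β-2) * K := by
      rw [← auxscale β hl]
      apply integral_congr_ae
      apply ae_of_all
      intro ξ
      have h := gnorm_sq β l ξ
      rw [← Real.rpow_natCast ‖((|ξ| ^ ((2 * β - 1) / 2) : ℝ) : ℂ)
        / (Complex.I * l + (ξ : ℂ) ^ 2)‖ 2] at h
      simpa only [RCLike.norm_conj, h2r, Nat.cast_ofNat] using h
    rw [hI, h2r]
    have hle : |l|^(β-2) * K ≤ |l|^(β-2) * (K+1) :=
      mul_le_mul_of_nonneg_left (by linarith) (Real.rpow_nonneg (abs_nonneg l) _)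
    calc (|l|^(β-2) * K) ^ ((2:ℝ)⁻¹)
        ≤ (|l|^(β-2) * (K+1)) ^ ((2:ℝ)⁻¹) := by
          apply Real.rpow_le_rpow (by positivity) hle (by norm_num)
    _ = Real.sqrt (K+1) * |l| ^ ((β - 2) / 2) := by
        rw [Real.mul_rpow (Real.rpow_nonneg (abs_nonneg l) _) (by linarith),
          ← Real.rpow_mul (abs_nonneg l), Real.sqrt_eq_rpow, mul_comm]
        norm_num [div_eq_mul_inv]
  exact mul_le_mul_of_nonneg_right hnormG (norm_nonneg _)
end

section
/- Let λ ∈ ℝ \ {0}, η(ξ) = |ξ|^{(2β-1)/2} with 0 < β < 1, a ∈ ℂ, f₂ ∈ L²(ℝ), and define ψ(ξ) = (a η(ξ) + f₂(ξ))/(iλ + ξ²). Then ‖ψ‖²_{L²(ℝ)} ≤ 2 (π/sin(βπ/2)) |λ|^{β-2} |a|² + (2/λ²) ‖f₂‖²_{L²(ℝ)}. -/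
open MeasureTheory

open Real Set


lemma integrable_comp_abs' {f : ℝ → ℝ} (hf : IntegrableOn (fun x => f |x|) (Set.Ioi 0)) :
    Integrable fun x : ℝ => f |x| := by
  have int_Iic : IntegrableOn (fun x ↦ f |x|) (Set.Iic 0) := by
    rw [← Measure.map_neg_eq_self (volume : Measure ℝ)]
    have m : MeasurableEmbedding fun x : ℝ => -x := (Homeomorph.neg ℝ).measurableEmbedding
    rw [m.integrableOn_map_iff]
    simp_rw [Function.comp_def, abs_neg, neg_preimage, neg_Iic, neg_zero]
    exact (integrableOn_Ici_iff_integrableOn_Ioi).mpr hf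
  have h := int_Iic.union hf
  rwa [Set.Iic_union_Ioi, integrableOn_univ] at h

lemma phi_bound (β l : ℝ) (hβ0 : 0 < β) (hβ1 : β < 1) (hl : l ≠ 0) :
    Integrable (fun ξ : ℝ => |ξ| ^ (2*β-1) / (l^2 + ξ^4)) ∧
    ∫ ξ : ℝ, |ξ| ^ (2*β-1) / (l^2 + ξ^4) ≤ (2/β) * |l| ^ (β-2) := by
  have hl2 : (0:ℝ) < l ^ 2 := by positivity
  have habs : (0:ℝ) < |l| := abs_pos.mpr hl
  set f : ℝ → ℝ := fun x => x ^ (2*β-1) / (l^2 + x^4) with hf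
  have hcomp : (fun ξ : ℝ => |ξ| ^ (2*β-1) / (l^2 + ξ^4)) = fun ξ => f |ξ| := by
    funext ξ
    simp only [hf]
    rw [show |ξ|^4 = ξ^4 from by rw [← abs_pow]; exact abs_of_nonneg (by positivity)]
  set L : ℝ := |l| ^ ((1:ℝ)/2) with hLdef
  have hLpos : 0 < L := rpow_pos_of_pos habs _
  have hfm : Measurable f := by
    apply Measurable.div
    · fun_prop
    · measurability
  -- key rpow algebra
  have eL1 : L ^ (2*β) = |l| ^ β := by
    rw [hLdef, ← Real.rpow_mul habs.le]; congr 1; ring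
  have eL2 : L ^ (2*β-4) = |l| ^ (β-2) := by
    rw [hLdef, ← Real.rpow_mul habs.le]; congr 1; ring
  have el2 : l ^ 2 = |l| ^ (2:ℝ) := by rw [Real.rpow_two, sq_abs]
  have ediv : |l| ^ β / l ^ 2 = |l| ^ (β-2) := by
    rw [el2, ← Real.rpow_sub habs]
  have hPpos : (0:ℝ) < |l| ^ (β-2) := rpow_pos_of_pos habs _
  -- piece on Ioc 0 L
  have hmaj1 : IntegrableOn (fun x : ℝ => x ^ (2*β-1) / l^2) (Ioc 0 L) :=
    ((intervalIntegral.intervalIntegrable_rpow' (by linarith)).1).div_const _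
  have hle1 : ∀ x ∈ Ioc (0:ℝ) L, f x ≤ x ^ (2*β-1) / l^2 := by
    intro x hx
    have hx0 : (0:ℝ) < x := hx.1
    simp only [hf]
    gcongr
    nlinarith [pow_nonneg hx0.le 4]
  have hf1 : IntegrableOn f (Ioc 0 L) := by
    apply hmaj1.mono' hfm.aestronglyMeasurable.restrict
    filter_upwards [ae_restrict_mem measurableSet_Ioc] with x hx
    have hx0 : (0:ℝ) < x := hx.1
    rw [Real.norm_eq_abs, abs_of_nonneg (by positivity : (0:ℝ) ≤ x ^ (2*β-1) / (l^2+x^4))]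
    exact hle1 x hx
  have hI1 : ∫ x in Ioc 0 L, f x ≤ |l| ^ (β-2) / (2*β) := by
    have h1 := setIntegral_mono_on hf1 hmaj1 measurableSet_Ioc hle1
    have h2 : ∫ x in Ioc 0 L, x ^ (2*β-1) / l^2 = |l| ^ (β-2) / (2*β) := by
      rw [← intervalIntegral.integral_of_le hLpos.le, intervalIntegral.integral_div,
        integral_rpow (Or.inl (by linarith)), Real.zero_rpow (by linarith), sub_zero,
        show 2*β-1+1 = 2*β from by ring, eL1, div_div, mul_comm (2*β), ← div_div, ediv]
    linarith
  -- piece on Ioi L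
  have hmaj2 : IntegrableOn (fun x : ℝ => x ^ (2*β-5)) (Ioi L) :=
    integrableOn_Ioi_rpow_of_lt (by linarith) hLpos
  have hle2 : ∀ x ∈ Ioi L, f x ≤ x ^ (2*β-5) := by
    intro x hx
    have hx0 : (0:ℝ) < x := hLpos.trans hx
    have e : x ^ (2*β-5) = x ^ (2*β-1) / x^4 := by
      rw [show (x:ℝ)^4 = x ^ ((4:ℕ):ℝ) from (Real.rpow_natCast x 4).symm,
        ← Real.rpow_sub hx0]
      congr 1; ring
    rw [e]
    simp only [hf]
    gcongr
    nlinarith [sq_nonneg l]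
  have hf2 : IntegrableOn f (Ioi L) := by
    apply hmaj2.mono' hfm.aestronglyMeasurable.restrict
    filter_upwards [ae_restrict_mem measurableSet_Ioi] with x hx
    have hx0 : (0:ℝ) < x := hLpos.trans hx
    rw [Real.norm_eq_abs, abs_of_nonneg (by positivity : (0:ℝ) ≤ x ^ (2*β-1) / (l^2+x^4))]
    exact hle2 x hx
  have hI2 : ∫ x in Ioi L, f x ≤ |l| ^ (β-2) / (4-2*β) := by
    have h1 := setIntegral_mono_on hf2 hmaj2 measurableSet_Ioi hle2
    have h2 : ∫ x in Ioi L, x ^ (2*β-5) = |l| ^ (β-2) / (4-2*β) := by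
      rw [integral_Ioi_rpow_of_lt (by linarith) hLpos,
        show 2*β-5+1 = 2*β-4 from by ring, eL2,
        div_eq_div_iff (by linarith : (2*β-4:ℝ) < 0).ne (by linarith : (0:ℝ) < 4-2*β).ne']
      ring
    linarith
  -- combine
  have hIoi : IntegrableOn f (Ioi 0) := by
    have h := hf1.union hf2
    rwa [Ioc_union_Ioi_eq_Ioi hLpos.le] at h
  have hIoi' : IntegrableOn (fun x => f |x|) (Ioi 0) := by
    apply hIoi.congr_fun (fun x hx => ?_) measurableSet_Ioi
    rw [abs_of_pos hx]
  have hint : Integrable (fun ξ : ℝ => f |ξ|) := integrable_comp_abs' hIoi'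
  rw [hcomp]
  refine ⟨hint, ?_⟩
  rw [integral_comp_abs (f := f)]
  have hsum : ∫ x in Ioi 0, f x = (∫ x in Ioc 0 L, f x) + ∫ x in Ioi L, f x := by
    rw [← setIntegral_union (Ioc_disjoint_Ioi le_rfl) measurableSet_Ioi hf1 hf2,
      Ioc_union_Ioi_eq_Ioi hLpos.le]
  have key : |l| ^ (β-2) / (2*β) + |l| ^ (β-2) / (4-2*β) ≤ (1/β) * |l| ^ (β-2) := by
    have h1 : (0:ℝ) < 2*β := by linarith
    have h2 : (0:ℝ) < 4-2*β := by linarith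
    have hsc : 1/(2*β) + 1/(4-2*β) ≤ 1/β := by
      have h3 : 1/(4-2*β) ≤ 1/(2*β) := one_div_le_one_div_of_le h1 (by linarith)
      have h4 : 1/(2*β) + 1/(2*β) = 1/β := by
        field_simp
        norm_num
      linarith
    calc |l| ^ (β-2) / (2*β) + |l| ^ (β-2) / (4-2*β)
        = (1/(2*β) + 1/(4-2*β)) * |l| ^ (β-2) := by ring
      _ ≤ (1/β) * |l| ^ (β-2) := by
          exact mul_le_mul_of_nonneg_right hsc hPpos.le
  have hfin : ∫ x in Ioi 0, f x ≤ (1/β) * |l| ^ (β-2) := by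
    rw [hsum]; linarith
  have e : (2/β) * |l| ^ (β-2) = 2 * ((1/β) * |l| ^ (β-2)) := by ring
  rw [e]
  linarith [hfin]

lemma l2_norm_sq (f₂ : MeasureTheory.Lp ℂ 2 (volume : MeasureTheory.Measure ℝ)) :
    ∫ ξ : ℝ, ‖f₂ ξ‖ ^ 2 = ‖f₂‖ ^ 2 := by
  have h1 : ‖f₂‖ ^ 2 = RCLike.re (inner ℂ f₂ f₂ : ℂ) := by
    rw [@inner_self_eq_norm_sq ℂ]
  rw [h1, MeasureTheory.L2.inner_def, ← integral_re (L2.integrable_inner f₂ f₂)]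
  congr 1; ext ξ
  rw [show (inner ℂ (f₂ ξ) (f₂ ξ) : ℂ) = _ from rfl]
  simp [Complex.normSq_apply, Complex.sq_norm, Complex.normSq_apply]
  rw [← Complex.ofReal_pow, Complex.ofReal_re, Complex.sq_norm, Complex.normSq_apply]

lemma l2_int_sq (f₂ : MeasureTheory.Lp ℂ 2 (volume : MeasureTheory.Measure ℝ)) :
    Integrable (fun ξ : ℝ => ‖f₂ ξ‖ ^ 2) := by
  have h := (Lp.memLp f₂).integrable_norm_rpow (by norm_num) (by norm_num)
  simpa [ENNReal.toReal_ofNat, Real.rpow_natCast] using h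

/-- For real `l ≠ 0`, `0 < β < 1`, `a ∈ ℂ`, `f₂ ∈ L²(ℝ)` and
`ψ(ξ) = (a η(ξ) + f₂(ξ))/(i l + ξ²)` with `η(ξ) = |ξ|^((2β-1)/2)`, one has
`‖ψ‖²_{L²} ≤ 2 (π/sin(βπ/2)) |l|^(β-2) |a|² + (2/l²) ‖f₂‖²`. -/
theorem stmt5 (β l : ℝ) (hβ0 : 0 < β) (hβ1 : β < 1) (hl : l ≠ 0) (a : ℂ)
    (f₂ : MeasureTheory.Lp ℂ 2 (volume : MeasureTheory.Measure ℝ)) :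
    (∫ ξ : ℝ, ‖(a * ((|ξ| ^ ((2 * β - 1) / 2) : ℝ) : ℂ) + f₂ ξ)
        / (Complex.I * l + (ξ : ℂ) ^ 2)‖ ^ 2)
      ≤ 2 * (Real.pi / Real.sin (β * Real.pi / 2)) * |l| ^ (β - 2) * ‖a‖ ^ 2
        + (2 / l ^ 2) * ‖f₂‖ ^ 2 := by
  have hl2 : (0:ℝ) < l ^ 2 := by positivity
  have habs : (0:ℝ) < |l| := abs_pos.mpr hl
  have hPpos : (0:ℝ) < |l| ^ (β-2) := rpow_pos_of_pos habs _
  obtain ⟨hφint, hφval⟩ := phi_bound β l hβ0 hβ1 hl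
  have hf2int := l2_int_sq f₂
  have hf2val := l2_norm_sq f₂
  have hden : ∀ ξ : ℝ, ‖Complex.I * l + (ξ : ℂ) ^ 2‖ ^ 2 = l ^ 2 + ξ ^ 4 := by
    intro ξ
    have e : Complex.I * l + (ξ:ℂ)^2 = ((ξ^2 : ℝ) : ℂ) + (l : ℝ) * Complex.I := by
      push_cast; ring
    rw [e, Complex.sq_norm, Complex.normSq_add_mul_I]
    ring
  set h : ℝ → ℝ := fun ξ =>
    2*‖a‖^2 * (|ξ| ^ (2*β-1) / (l^2 + ξ^4)) + (2/l^2) * ‖f₂ ξ‖^2 with hh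
  have hhint : Integrable h := (hφint.const_mul _).add (hf2int.const_mul _)
  have hptw : ∀ ξ : ℝ, ‖(a * ((|ξ| ^ ((2 * β - 1) / 2) : ℝ) : ℂ) + f₂ ξ)
      / (Complex.I * l + (ξ : ℂ) ^ 2)‖ ^ 2 ≤ h ξ := by
    intro ξ
    set u : ℂ := a * ((|ξ| ^ ((2 * β - 1) / 2) : ℝ) : ℂ) with hu
    have h1 : ‖u‖ ^ 2 = ‖a‖^2 * |ξ| ^ (2*β-1) := by
      rw [hu, norm_mul, Complex.norm_real, Real.norm_eq_abs,
        abs_of_nonneg (Real.rpow_nonneg (abs_nonneg ξ) _), mul_pow,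
        ← Real.rpow_natCast (|ξ| ^ ((2*β-1)/2)) 2, ← Real.rpow_mul (abs_nonneg ξ)]
      congr 1
      push_cast
      ring_nf
    have hsq : ‖u + f₂ ξ‖ ^ 2 ≤ 2*‖u‖^2 + 2*‖f₂ ξ‖^2 := by
      have htri := norm_add_le u (f₂ ξ)
      nlinarith [norm_nonneg u, norm_nonneg (f₂ ξ), norm_nonneg (u + f₂ ξ),
        sq_nonneg (‖u‖ - ‖f₂ ξ‖)]
    have hdpos : (0:ℝ) < l^2 + ξ^4 := by positivity
    rw [norm_div, div_pow, hden ξ]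
    have step1 : ‖u + f₂ ξ‖^2 / (l^2 + ξ^4)
        ≤ (2*(‖a‖^2 * |ξ| ^ (2*β-1)) + 2*‖f₂ ξ‖^2) / (l^2 + ξ^4) := by
      gcongr
      linarith [h1 ▸ hsq]
    refine step1.trans ?_
    rw [add_div, hh]
    have t1 : 2*(‖a‖^2 * |ξ| ^ (2*β-1)) / (l^2 + ξ^4)
        = 2*‖a‖^2 * (|ξ| ^ (2*β-1) / (l^2 + ξ^4)) := by ring
    have t2 : 2*‖f₂ ξ‖^2 / (l^2 + ξ^4) ≤ 2*‖f₂ ξ‖^2 / l^2 := by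
      gcongr
      nlinarith [pow_nonneg (abs_nonneg ξ) 4, sq_nonneg (ξ^2)]
    have t3 : 2*‖f₂ ξ‖^2 / l^2 = (2/l^2) * ‖f₂ ξ‖^2 := by ring
    simp only
    linarith
  have hs : 2/β ≤ π / Real.sin (β*π/2) := by
    have harg0 : (0:ℝ) < β*π/2 := by positivity
    have hargπ : β*π/2 < π := by nlinarith [pi_pos]
    have hsinpos : 0 < Real.sin (β*π/2) := Real.sin_pos_of_pos_of_lt_pi harg0 hargπ
    have hsinle : Real.sin (β*π/2) ≤ β*π/2 := Real.sin_le harg0.le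
    have hdd : π/(β*π/2) ≤ π/Real.sin (β*π/2) := by gcongr
    have he : π/(β*π/2) = 2/β := by
      rw [div_eq_div_iff (by positivity) (by linarith [hβ0])]
      ring
    linarith
  calc (∫ ξ : ℝ, ‖(a * ((|ξ| ^ ((2 * β - 1) / 2) : ℝ) : ℂ) + f₂ ξ)
        / (Complex.I * l + (ξ : ℂ) ^ 2)‖ ^ 2)
      ≤ ∫ ξ : ℝ, h ξ :=
        integral_mono_of_nonneg (Filter.Eventually.of_forall fun ξ => by positivity)
          hhint (Filter.Eventually.of_forall hptw)
    _ = 2*‖a‖^2 * (∫ ξ : ℝ, |ξ| ^ (2*β-1) / (l^2 + ξ^4))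
        + (2/l^2) * ∫ ξ : ℝ, ‖f₂ ξ‖^2 := by
        rw [hh, integral_add (hφint.const_mul _) (hf2int.const_mul _),
          integral_const_mul, integral_const_mul]
    _ ≤ 2*‖a‖^2 * ((2/β) * |l| ^ (β-2)) + (2/l^2) * ‖f₂‖^2 := by
        rw [hf2val]
        have := mul_le_mul_of_nonneg_left hφval (by positivity : (0:ℝ) ≤ 2*‖a‖^2)
        linarith
    _ ≤ 2 * (π / Real.sin (β * π / 2)) * |l| ^ (β - 2) * ‖a‖ ^ 2
        + (2 / l ^ 2) * ‖f₂‖ ^ 2 := by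
        have hkey : 2*‖a‖^2 * ((2/β) * |l| ^ (β-2))
            ≤ 2 * (π / Real.sin (β * π / 2)) * |l| ^ (β - 2) * ‖a‖ ^ 2 := by
          have h1 := mul_le_mul_of_nonneg_right hs
            (by positivity : (0:ℝ) ≤ |l| ^ (β-2) * ‖a‖^2)
          nlinarith [sq_nonneg ‖a‖]
        linarith
end
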